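/- The star root of P_q, defined as P_q \ (P_q²·P_q*), is a suffix code: no element of it is a proper suffix of another element. -/
import Mathlib


/-- `u ^ n` for lists: concatenation of `n` copies of `u`. -/
def listPow {X : Type*} (u : List X) : ℕ → List X
  | 0 => []
  | n+1 => u ++ listPow u n

/-- `P_q = { v : e ⊏ v ⊑ q ⊏ v·q }`. -/
def Pq {X : Type*} (q : List X) : Set (List X) :=
  {v | v ≠ [] ∧ v <+: q ∧ q <+: v ++ q}

/-- membership in the submonoid `P^*` generated by `P`. -/
def InStar {X : Type*} (P : Set (List X)) (w : List X) : Prop :=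
  ∃ l : List (List X), (∀ v ∈ l, v ∈ P) ∧ w = l.flatten

/-- A finite word `w` is quasiperiodic with quasiperiod `q`. -/
def QuasiPeriodic {X : Type*} (q w : List X) : Prop :=
  ∀ j < w.length, ∃ u : List X, u.length ≤ j ∧ j < u.length + q.length ∧ (u ++ q) <+: w

/-- `Q_q`: the set of finite words quasiperiodic with quasiperiod `q`. -/
def Qq {X : Type*} (q : List X) : Set (List X) := {w | QuasiPeriodic q w}

/-- `u` is a (finite) prefix of the infinite word `ξ`. -/
def InfPrefix {X : Type*} (ξ : ℕ → X) (u : List X) : Prop :=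
  u = (List.range u.length).map ξ

/-- An infinite word `ξ` is quasiperiodic with quasiperiod `q`. -/
def QuasiPeriodicInf {X : Type*} (q : List X) (ξ : ℕ → X) : Prop :=
  ∀ j : ℕ, ∃ u : List X, u.length ≤ j ∧ j < u.length + q.length ∧ InfPrefix ξ (u ++ q)

/-- the star root `P \ (P²·P*)`. -/
def StarRoot {X : Type*} (P : Set (List X)) : Set (List X) :=
  {v | v ∈ P ∧ ¬ ∃ (a b : List X) (l : List (List X)),
    a ∈ P ∧ b ∈ P ∧ (∀ x ∈ l, x ∈ P) ∧ v = a ++ b ++ l.flatten}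

/-- `ξ ∈ P^ω`: infinite concatenation of nonempty words of `P`. -/
def InOmega {X : Type*} (P : Set (List X)) (ξ : ℕ → X) : Prop :=
  ∃ f : ℕ → List X, (∀ i, f i ∈ P ∧ f i ≠ []) ∧
    ∀ n, InfPrefix ξ ((List.range n).map f).flatten

/-- The star root of `P_q` is a suffix code. -/
theorem stmt13 {X : Type*} (q : List X) (hq : q ≠ []) :
    ∀ u ∈ StarRoot (Pq q), ∀ v ∈ StarRoot (Pq q), u <:+ v → u = v := by
  rintro u ⟨⟨hune, huq, hqu⟩, -⟩ v ⟨⟨hvne, hvq, hqv⟩, hvnot⟩ ⟨w, rfl⟩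
  rcases eq_or_ne w [] with rfl | hwne
  · simp
  exfalso
  apply hvnot
  refine ⟨w, u, [], ⟨hwne, ?_, ?_⟩, ⟨hune, huq, hqu⟩, by simp, by simp⟩
  · exact (List.prefix_append w u).trans hvq
  · obtain ⟨s, hs⟩ := hqu
    have h1 : q <+: (w ++ q) ++ s := by
      have := hqv
      rwa [List.append_assoc, ← hs, ← List.append_assoc] at this
    exact List.prefix_of_prefix_length_le h1 (List.prefix_append _ _)
      (by simp)
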